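/- The class of coarse p-limited sets has Grothendieck's encapsulating property: if A ⊆ X is such that for every ε > 0 there exists a coarse p-limited set A_ε with A ⊆ A_ε + ε B_X, then A is coarse p-limited. -/

import Mathlib

open Filter Topology Metric Pointwise

noncomputable section

/-- The sequence space `ℓ_p` over `ℝ`. -/
abbrev lpS (p : ENNReal) : Type := lp (fun _ : ℕ => ℝ) p

variable {W X Y Z : Type*}

/-- A set `A ⊆ X` is coarse `p`-limited if every bounded operator `T : X → ℓ_p`
maps `A` to a relatively compact subset of `ℓ_p`. -/
def CoarsePLimited (p : ENNReal) [Fact (1 ≤ p)]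
    [NormedAddCommGroup X] [NormedSpace ℝ X] (A : Set X) : Prop :=
  ∀ T : X →L[ℝ] lpS p, IsCompact (closure (T '' A))

/-- A sequence is weakly null if every continuous functional sends it to a null sequence. -/
def WeaklyNull [NormedAddCommGroup X] [NormedSpace ℝ X] (x : ℕ → X) : Prop :=
  ∀ f : X →L[ℝ] ℝ, Tendsto (fun n => f (x n)) atTop (𝓝 0)

/-- A sequence is weakly Cauchy if every continuous functional sends it to a Cauchy sequence. -/
def WeaklyCauchy [NormedAddCommGroup X] [NormedSpace ℝ X] (x : ℕ → X) : Prop :=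
  ∀ f : X →L[ℝ] ℝ, CauchySeq (fun n => f (x n))

/-- A set is conditionally weakly compact if every sequence in it has a weakly
Cauchy subsequence. -/
def CondWeaklyCompact [NormedAddCommGroup X] [NormedSpace ℝ X] (A : Set X) : Prop :=
  ∀ x : ℕ → X, (∀ n, x n ∈ A) → ∃ φ : ℕ → ℕ, StrictMono φ ∧ WeaklyCauchy (x ∘ φ)

/-- A set is relatively weakly compact if its closure in the weak topology is compact. -/
def RelWeaklyCompact [NormedAddCommGroup X] [NormedSpace ℝ X] (A : Set X) : Prop :=
  IsCompact (closure ((toWeakSpaceCLM ℝ X) '' A))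

/-- A Banach space has the coarse `p`-DP* property if every relatively weakly compact
subset is coarse `p`-limited. -/
def CoarsePDPstar (p : ENNReal) [Fact (1 ≤ p)] (X : Type*)
    [NormedAddCommGroup X] [NormedSpace ℝ X] : Prop :=
  ∀ A : Set X, RelWeaklyCompact A → CoarsePLimited p A

/-- A Banach space has the coarse `p`-Gelfand-Phillips property if every coarse
`p`-limited subset is relatively compact. -/
def CoarsePGP (p : ENNReal) [Fact (1 ≤ p)] (X : Type*)
    [NormedAddCommGroup X] [NormedSpace ℝ X] : Prop :=
  ∀ A : Set X, CoarsePLimited p A → IsCompact (closure A)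

/-- A set `A` is limited if every weak*-null sequence of functionals converges to `0`
uniformly on `A`. -/
def LimitedSet [NormedAddCommGroup X] [NormedSpace ℝ X] (A : Set X) : Prop :=
  ∀ f : ℕ → (X →L[ℝ] ℝ), (∀ x : X, Tendsto (fun n => f n x) atTop (𝓝 0)) →
    TendstoUniformlyOn (fun n x => f n x) 0 atTop A

/-- A set `A` is `p`-limited if for every weak* `p`-summable sequence `(f n)` of
functionals there is `a ∈ ℓ_p` with `|f n x| ≤ a n` for all `x ∈ A` and all `n`. -/
def PLimitedSet (p : ENNReal) [NormedAddCommGroup X] [NormedSpace ℝ X] (A : Set X) : Prop :=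
  ∀ f : ℕ → (X →L[ℝ] ℝ), (∀ x : X, Memℓp (fun n => f n x) p) →
    ∃ a : ℕ → ℝ, Memℓp a p ∧ ∀ x ∈ A, ∀ n, |f n x| ≤ a n

/-- A sequence of vectors has norm-null if its norms tend to zero. -/
def NormNull [NormedAddCommGroup X] (x : ℕ → X) : Prop :=
  Tendsto (fun n => ‖x n‖) atTop (𝓝 0)

/-- The Schur property: weakly null sequences are norm null. -/
def SchurProp (X : Type*) [NormedAddCommGroup X] [NormedSpace ℝ X] : Prop :=
  ∀ x : ℕ → X, WeaklyNull x → NormNull x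

/-- A coarse `p`-limited operator: the image of the unit ball is coarse `p`-limited. -/
def CoarsePLimOp (p : ENNReal) [Fact (1 ≤ p)] [NormedAddCommGroup X] [NormedSpace ℝ X]
    [NormedAddCommGroup Y] [NormedSpace ℝ Y] (T : X →L[ℝ] Y) : Prop :=
  CoarsePLimited p (T '' closedBall (0 : X) 1)

/-- A weakly compact operator: the image of the unit ball is relatively weakly compact. -/
def WeaklyCompactOp [NormedAddCommGroup X] [NormedSpace ℝ X]
    [NormedAddCommGroup Y] [NormedSpace ℝ Y] (T : X →L[ℝ] Y) : Prop :=
  RelWeaklyCompact (T '' closedBall (0 : X) 1)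

/-- A compact operator: the image of the unit ball is relatively compact. -/
def CompactOp [NormedAddCommGroup X] [NormedSpace ℝ X]
    [NormedAddCommGroup Y] [NormedSpace ℝ Y] (T : X →L[ℝ] Y) : Prop :=
  IsCompact (closure (T '' closedBall (0 : X) 1))

/-- `X` contains an isomorphic copy of `ℓ₁`. -/
def ContainsL1 (X : Type*) [NormedAddCommGroup X] [NormedSpace ℝ X] : Prop :=
  ∃ T : lpS 1 →L[ℝ] X, ∃ c : ℝ, 0 < c ∧ ∀ v : lpS 1, c * ‖v‖ ≤ ‖T v‖

theorem stmt11 (p : ENNReal) [Fact (1 ≤ p)] (hp : p ≠ ⊤)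
    [NormedAddCommGroup X] [NormedSpace ℝ X] [CompleteSpace X]
    (A : Set X)
    (h : ∀ ε : ℝ, 0 < ε → ∃ B : Set X, CoarsePLimited p B ∧ A ⊆ B + ε • closedBall (0 : X) 1) :
    CoarsePLimited p A := by
  intro T
  apply TotallyBounded.isCompact_of_isClosed _ isClosed_closure
  apply TotallyBounded.closure
  rw [Metric.totallyBounded_iff]
  intro ε hε
  set δ : ℝ := (ε / 2) / (‖T‖ + 1) with hδdef
  have hTpos : (0:ℝ) < ‖T‖ + 1 := by positivity
  have hδ : 0 < δ := by positivity
  obtain ⟨B, hB, hAB⟩ := h δ hδ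
  have hTB : TotallyBounded (T '' B) :=
    ((hB T).totallyBounded).subset subset_closure
  obtain ⟨t, htfin, hcov⟩ := (Metric.totallyBounded_iff.mp hTB) (ε / 2) (by positivity)
  refine ⟨t, htfin, ?_⟩
  rintro _ ⟨x, hx, rfl⟩
  obtain ⟨b, hb, u, hu, rfl⟩ := hAB hx
  obtain ⟨v, hv, rfl⟩ := hu
  have hTb := hcov ⟨b, hb, rfl⟩
  simp only [Set.mem_iUnion] at hTb ⊢
  obtain ⟨y, hy, hby⟩ := hTb
  refine ⟨y, hy, ?_⟩
  rw [Metric.mem_ball] at hby ⊢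
  have hv1 : ‖v‖ ≤ 1 := by simpa using Metric.mem_closedBall.mp hv
  have h1 : ‖T (δ • v)‖ ≤ δ * ‖T‖ := by
    calc ‖T (δ • v)‖ ≤ ‖T‖ * ‖δ • v‖ := T.le_opNorm _
    _ = ‖T‖ * (δ * ‖v‖) := by rw [norm_smul, Real.norm_of_nonneg hδ.le]
    _ ≤ ‖T‖ * (δ * 1) := by
        apply mul_le_mul_of_nonneg_left _ (norm_nonneg T)
        exact mul_le_mul_of_nonneg_left hv1 hδ.le
    _ = δ * ‖T‖ := by ring
  have h2 : δ * ‖T‖ < ε / 2 := by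
    have : δ * (‖T‖ + 1) = ε / 2 := by
      rw [hδdef]; field_simp
    nlinarith [hδ]
  calc dist (T (b + δ • v)) y ≤ dist (T (b + δ • v)) (T b) + dist (T b) y :=
        dist_triangle _ _ _
    _ < ε / 2 + ε / 2 := by
        apply add_lt_add_of_le_of_lt _ hby
        rw [dist_eq_norm, ← map_sub]
        simpa using h1.trans h2.le
    _ = ε := by ring
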